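/- Incenter subdivision into obtuse triangles: let A, B, C ∈ ℝ² be affinely independent, let I be the incenter of triangle ABC, and let T = convexHull ℝ {A, B, C}. Then the three triangles T₁ = convexHull ℝ {A, I, B}, T₂ = convexHull ℝ {B, I, C}, T₃ = convexHull ℝ {C, I, A} have pairwise disjoint interiors, their union is T, and each of the angles ∠ A I B, ∠ B I C, ∠ C I A is strictly greater than π/2. -/

import Mathlib

noncomputable section

open EuclideanGeometry Real InnerProductSpace

set_option maxHeartbeats 1000000

/-- The Euclidean plane. -/
abbrev Plane : Type := EuclideanSpace ℝ (Fin 2)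

/-- The incenter of triangle `ABC`: the barycentric combination with weights
proportional to the opposite side lengths. -/
def triIncenter (A B C : Plane) : Plane :=
  (dist B C / (dist B C + dist C A + dist A B)) • A +
  (dist C A / (dist B C + dist C A + dist A B)) • B +
  (dist A B / (dist B C + dist C A + dist A B)) • C

lemma aux_interior_pos (f : Plane →ᵃ[ℝ] ℝ) {p q : Plane} (hpq : f p ≠ f q)
    {S : Set Plane} (hS : ∀ y ∈ S, 0 ≤ f y) {x : Plane} (hx : x ∈ interior S) : 0 < f x := by
  have hx0 : 0 ≤ f x := hS x (interior_subset hx)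
  rcases hx0.lt_or_eq with h | h
  · exact h
  exfalso
  obtain ⟨ε, hε, hball⟩ := Metric.mem_nhds_iff.1 (mem_interior_iff_mem_nhds.1 hx)
  set v : Plane := p - q with hv
  have hfl : f.linear v = f p - f q := by
    rw [hv, map_sub]
    simpa [vsub_eq_sub] using f.linearMap_vsub p q
  have hd : f.linear v ≠ 0 := by rw [hfl]; exact sub_ne_zero.2 hpq
  have hvne : v ≠ 0 := fun h0 => hd (by simp [h0])
  have hnv : 0 < ‖v‖ := norm_pos_iff.2 hvne
  set u : Plane := (ε / (2 * ‖v‖)) • v with hu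
  have hnu : ‖u‖ = ε / 2 := by
    rw [hu, norm_smul, Real.norm_eq_abs, abs_of_pos (by positivity)]
    field_simp
  have hlu : f.linear u = (ε / (2 * ‖v‖)) * f.linear v := by
    rw [hu, map_smul, smul_eq_mul]
  have hlune : f.linear u ≠ 0 := by
    rw [hlu]; exact mul_ne_zero (by positivity) hd
  rcases hlune.lt_or_gt with hneg | hpos
  · have hmem : x + u ∈ S := by
      apply hball
      rw [Metric.mem_ball, dist_eq_norm]
      have he : x + u - x = u := by abel
      rw [he, hnu]; linarith
    have : f (x + u) = f.linear u + f x := by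
      have := f.map_vadd x u
      simpa [vadd_eq_add, add_comm] using this
    have := hS _ hmem
    rw [‹f (x + u) = _›] at this
    linarith
  · have hmem : x - u ∈ S := by
      apply hball
      rw [Metric.mem_ball, dist_eq_norm]
      have he : x - u - x = -u := by abel
      rw [he, norm_neg, hnu]; linarith
    have heq : f (x - u) = f.linear (-u) + f x := by
      have := f.map_vadd x (-u)
      simpa [vadd_eq_add, sub_eq_neg_add] using this
    have := hS _ hmem
    rw [heq, map_neg] at this
    linarith

lemma aux_combo_mem {P Q R : Plane} {lam mu nu : ℝ} (hl : 0 ≤ lam) (hm : 0 ≤ mu)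
    (hn : 0 ≤ nu) (hs : lam + mu + nu = 1) :
    lam • P + mu • Q + nu • R ∈ convexHull ℝ ({P, Q, R} : Set Plane) := by
  have hsum : ∑ i, (![lam, mu, nu] : Fin 3 → ℝ) i = 1 := by
    rw [Fin.sum_univ_three]; simpa using hs
  have h := Finset.centerMass_mem_convexHull (Finset.univ : Finset (Fin 3))
    (w := ![lam, mu, nu]) (z := ![P, Q, R]) (s := ({P, Q, R} : Set Plane))
    (fun i _ => by fin_cases i <;> simpa)
    (by rw [hsum]; norm_num)
    (fun i _ => by fin_cases i <;> simp)
  rwa [Finset.centerMass_eq_of_sum_1 _ _ hsum, Fin.sum_univ_three] at h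

lemma aux_hull_char (A B C I : Plane) (α β γ : Plane →ᵃ[ℝ] ℝ)
    (a b c : ℝ) (ha : 0 < a) (hb : 0 < b) (hc : 0 < c)
    (hαA : α A = 1) (hβA : β A = 0) (hγA : γ A = 0)
    (hαB : α B = 0) (hβB : β B = 1) (hγB : γ B = 0)
    (hαI : α I = a / (a + b + c)) (hβI : β I = b / (a + b + c))
    (hγI : γ I = c / (a + b + c))
    (hrec : ∀ x : Plane, x = α x • A + β x • B + γ x • C)
    (hsum : ∀ x : Plane, α x + β x + γ x = 1) :
    convexHull ℝ ({A, I, B} : Set Plane) =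
      {x | 0 ≤ γ x ∧ 0 ≤ c * α x - a * γ x ∧ 0 ≤ c * β x - b * γ x} := by
  have hs : (0:ℝ) < a + b + c := by linarith
  have hIexp : I = (a / (a + b + c)) • A + (b / (a + b + c)) • B + (c / (a + b + c)) • C := by
    conv_lhs => rw [hrec I]
    rw [hαI, hβI, hγI]
  apply Set.Subset.antisymm
  · apply convexHull_min
    · rintro x (rfl | rfl | rfl)
      · refine ⟨?_, ?_, ?_⟩ <;> simp only [hαA, hβA, hγA] <;> nlinarith
      · refine ⟨?_, ?_, ?_⟩ <;> simp only [hαI, hβI, hγI]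
        · positivity
        · have : c * (a / (a + b + c)) - a * (c / (a + b + c)) = 0 := by
            field_simp; ring
          rw [this]
        · have : c * (b / (a + b + c)) - b * (c / (a + b + c)) = 0 := by
            field_simp; ring
          rw [this]
      · refine ⟨?_, ?_, ?_⟩ <;> simp only [hαB, hβB, hγB] <;> nlinarith
    · set f₂ : Plane →ᵃ[ℝ] ℝ := c • α - a • γ with hf₂def
      set f₃ : Plane →ᵃ[ℝ] ℝ := c • β - b • γ with hf₃def
      have hf₂ : ∀ x, f₂ x = c * α x - a * γ x := fun x => by
        simp [hf₂def, AffineMap.coe_sub, AffineMap.coe_smul, Pi.sub_apply, Pi.smul_apply,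
          smul_eq_mul]
      have hf₃ : ∀ x, f₃ x = c * β x - b * γ x := fun x => by
        simp [hf₃def, AffineMap.coe_sub, AffineMap.coe_smul, Pi.sub_apply, Pi.smul_apply,
          smul_eq_mul]
      have h1 : Convex ℝ (γ ⁻¹' Set.Ici (0:ℝ)) := (convex_Ici _).affine_preimage _
      have h2 : Convex ℝ (f₂ ⁻¹' Set.Ici (0:ℝ)) := (convex_Ici _).affine_preimage _
      have h3 : Convex ℝ (f₃ ⁻¹' Set.Ici (0:ℝ)) := (convex_Ici _).affine_preimage _
      have heq : {x : Plane | 0 ≤ γ x ∧ 0 ≤ c * α x - a * γ x ∧ 0 ≤ c * β x - b * γ x} =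
          (γ ⁻¹' Set.Ici (0:ℝ)) ∩ (f₂ ⁻¹' Set.Ici (0:ℝ)) ∩ (f₃ ⁻¹' Set.Ici (0:ℝ)) := by
        ext x
        simp only [Set.mem_setOf_eq, Set.mem_inter_iff, Set.mem_preimage, Set.mem_Ici,
          hf₂, hf₃]
        tauto
      rw [heq]
      exact (h1.inter h2).inter h3
  · rintro x ⟨h1, h2, h3⟩
    have key : x = ((c * α x - a * γ x) / c) • A + (((a + b + c) / c) * γ x) • I +
        ((c * β x - b * γ x) / c) • B := by
      conv_lhs => rw [hrec x]
      rw [hIexp]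
      match_scalars <;> field_simp <;> ring
    rw [key]
    exact aux_combo_mem (by positivity) (by positivity)
      (by positivity) (by
        have hcs : c * (α x + β x + γ x) = c * 1 := by rw [hsum x]
        field_simp
        ring_nf
        ring_nf at hcs
        linarith)

lemma aux_inner_incenter {A B C I : Plane} {a b c : ℝ}
    (ha : a = dist B C) (hb : b = dist C A) (hc : c = dist A B)
    (ha0 : 0 < a) (hb0 : 0 < b) (hc0 : 0 < c)
    (htri1 : b < a + c) (htri2 : a < b + c)
    (hIdef : I = (a / (a + b + c)) • A + (b / (a + b + c)) • B + (c / (a + b + c)) • C) :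
    ⟪A - I, B - I⟫_ℝ < 0 := by
  have hs : (0:ℝ) < a + b + c := by linarith
  have hsne : (a + b + c) ≠ 0 := ne_of_gt hs
  set U : Plane := A - B with hU
  set V : Plane := A - C with hV
  have hA : A - I = (b / (a + b + c)) • U + (c / (a + b + c)) • V := by
    rw [hIdef, hU, hV]
    match_scalars <;> field_simp <;> ring
  have hB : B - I = (-((a + c) / (a + b + c))) • U + (c / (a + b + c)) • V := by
    rw [hIdef, hU, hV]
    match_scalars <;> field_simp <;> ring
  have hUU : ⟪U, U⟫_ℝ = c ^ 2 := by
    rw [real_inner_self_eq_norm_sq, hU, ← dist_eq_norm, ← hc]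
  have hVV : ⟪V, V⟫_ℝ = b ^ 2 := by
    rw [real_inner_self_eq_norm_sq, hV, ← dist_eq_norm, ← dist_comm, ← hb]
  have hUV : ⟪U, V⟫_ℝ = (c ^ 2 + b ^ 2 - a ^ 2) / 2 := by
    have h1 : ‖U - V‖ ^ 2 = ‖U‖ ^ 2 - 2 * ⟪U, V⟫_ℝ + ‖V‖ ^ 2 := norm_sub_sq_real U V
    have h2 : U - V = C - B := by rw [hU, hV]; abel
    have h3 : ‖C - B‖ = a := by rw [← dist_eq_norm, dist_comm, ← ha]
    have h4 : ‖U‖ = c := by rw [hU, ← dist_eq_norm, ← hc]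
    have h5 : ‖V‖ = b := by rw [hV, ← dist_eq_norm, dist_comm, ← hb]
    rw [h2, h3, h4, h5] at h1
    linarith
  have hVU : ⟪V, U⟫_ℝ = (c ^ 2 + b ^ 2 - a ^ 2) / 2 := by
    rw [real_inner_comm, hUV]
  have hexp : ⟪A - I, B - I⟫_ℝ = c * (b - a - c) * (b + c - a) / (2 * (a + b + c)) := by
    rw [hA, hB]
    rw [inner_add_left, inner_add_right, inner_add_right, real_inner_smul_left,
      real_inner_smul_left, real_inner_smul_left, real_inner_smul_left,
      real_inner_smul_right, real_inner_smul_right, real_inner_smul_right,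
      real_inner_smul_right, hUU, hUV, hVU, hVV]
    field_simp
    ring
  rw [hexp]
  apply div_neg_of_neg_of_pos
  · have h1 : (0:ℝ) < b + c - a := by linarith
    have h2 : b - a - c < 0 := by linarith
    exact mul_neg_of_neg_of_pos (mul_neg_of_pos_of_neg hc0 h2) h1
  · positivity

lemma aux_angle_obtuse {x y : Plane} (h : ⟪x, y⟫_ℝ < 0) :
    π / 2 < InnerProductGeometry.angle x y := by
  have hx : x ≠ 0 := by rintro rfl; simp at h
  have hy : y ≠ 0 := by rintro rfl; simp at h
  have hnx : 0 < ‖x‖ := norm_pos_iff.2 hx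
  have hny : 0 < ‖y‖ := norm_pos_iff.2 hy
  rw [InnerProductGeometry.angle]
  apply lt_of_not_ge
  intro hle
  rw [Real.arccos_le_pi_div_two] at hle
  have : ⟪x, y⟫_ℝ / (‖x‖ * ‖y‖) < 0 := div_neg_of_neg_of_pos h (by positivity)
  linarith

lemma aux_key {a b c P Q R : ℝ} (ha : 0 < a) (hb : 0 < b) (hc : 0 < c)
    (hiden : c * P + a * Q + b * R = 0) :
    (0 ≤ R ∧ 0 ≤ -Q) ∨ (0 ≤ P ∧ 0 ≤ -R) ∨ (0 ≤ Q ∧ 0 ≤ -P) := by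
  rcases le_total 0 P with hP | hP <;> rcases le_total 0 Q with hQ | hQ <;>
    rcases le_total 0 R with hR | hR
  · exact Or.inl ⟨hR, by nlinarith [mul_nonneg hc.le hP, mul_nonneg hb.le hR]⟩
  · exact Or.inr (Or.inl ⟨hP, by linarith⟩)
  · exact Or.inl ⟨hR, by linarith⟩
  · exact Or.inr (Or.inl ⟨hP, by linarith⟩)
  · exact Or.inr (Or.inr ⟨hQ, by linarith⟩)
  · exact Or.inr (Or.inr ⟨hQ, by linarith⟩)
  · exact Or.inl ⟨hR, by linarith⟩
  · exact Or.inl ⟨by nlinarith [mul_nonpos_of_nonneg_of_nonpos hc.le hP,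
      mul_nonpos_of_nonneg_of_nonpos ha.le hQ], by linarith⟩

lemma aux_strict_tri {X Y Z : Plane} (h : ¬Collinear ℝ ({X, Y, Z} : Set Plane)) :
    dist X Z < dist X Y + dist Y Z := by
  rcases lt_or_eq_of_le (dist_triangle X Y Z) with hlt | heq
  · exact hlt
  · exact absurd (dist_add_dist_eq_iff.1 heq.symm).collinear h

theorem incenter_subdivision (A B C : Plane)
    (hABC : AffineIndependent ℝ ![A, B, C])
    (I : Plane) (hI : I = triIncenter A B C)
    (T : Set Plane) (hT : T = convexHull ℝ {A, B, C})
    (T₁ : Set Plane) (hT₁ : T₁ = convexHull ℝ {A, I, B})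
    (T₂ : Set Plane) (hT₂ : T₂ = convexHull ℝ {B, I, C})
    (T₃ : Set Plane) (hT₃ : T₃ = convexHull ℝ {C, I, A}) :
    (interior T₁ ∩ interior T₂ = ∅) ∧
    (interior T₂ ∩ interior T₃ = ∅) ∧
    (interior T₃ ∩ interior T₁ = ∅) ∧
    T₁ ∪ T₂ ∪ T₃ = T ∧
    ∠ A I B > π / 2 ∧ ∠ B I C > π / 2 ∧ ∠ C I A > π / 2 := by
  classical
  -- distinctness and positivity of side lengths
  have hinj := hABC.injective
  have hAB : A ≠ B := fun h =>
    absurd (hinj (show ![A, B, C] 0 = ![A, B, C] 1 from h)) (by decide)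
  have hBC : B ≠ C := fun h =>
    absurd (hinj (show ![A, B, C] 1 = ![A, B, C] 2 from h)) (by decide)
  have hCA : C ≠ A := fun h =>
    absurd (hinj (show ![A, B, C] 2 = ![A, B, C] 0 from h)) (by decide)
  set a : ℝ := dist B C with hadef
  set b : ℝ := dist C A with hbdef
  set c : ℝ := dist A B with hcdef
  have ha0 : 0 < a := dist_pos.2 hBC
  have hb0 : 0 < b := dist_pos.2 hCA
  have hc0 : 0 < c := dist_pos.2 hAB
  have hs0 : (0:ℝ) < a + b + c := by linarith
  -- noncollinearity and strict triangle inequalities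
  have hncol : ¬Collinear ℝ ({A, B, C} : Set Plane) := by
    intro hcol
    rw [affineIndependent_iff_not_collinear] at hABC
    have hr : Set.range ![A, B, C] = ({A, B, C} : Set Plane) := by
      ext x
      constructor
      · rintro ⟨i, rfl⟩; fin_cases i <;> simp
      · rintro (rfl | rfl | rfl)
        exacts [⟨0, rfl⟩, ⟨1, rfl⟩, ⟨2, rfl⟩]
    exact hABC (by rwa [hr])
  have hncol2 : ¬Collinear ℝ ({C, B, A} : Set Plane) := fun hcol => hncol (by
    have : ({C, B, A} : Set Plane) = {A, B, C} := by
      ext x; simp; tauto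
    rwa [this] at hcol)
  have hncol3 : ¬Collinear ℝ ({B, A, C} : Set Plane) := fun hcol => hncol (by
    have : ({B, A, C} : Set Plane) = {A, B, C} := by
      ext x; simp; tauto
    rwa [this] at hcol)
  have hncol4 : ¬Collinear ℝ ({A, C, B} : Set Plane) := fun hcol => hncol (by
    have : ({A, C, B} : Set Plane) = {A, B, C} := by
      ext x; simp; tauto
    rwa [this] at hcol)
  have tri1 : b < a + c := by
    have h := aux_strict_tri hncol2
    rw [dist_comm C B, dist_comm B A] at h
    rw [hadef, hbdef, hcdef]
    linarith
  have tri2 : a < b + c := by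
    have h := aux_strict_tri hncol3
    rw [dist_comm B A, dist_comm A C] at h
    rw [hadef, hbdef, hcdef]
    linarith
  have tri3 : c < a + b := by
    have h := aux_strict_tri hncol4
    rw [dist_comm A C, dist_comm C B] at h
    rw [hadef, hbdef, hcdef]
    linarith
  -- the affine basis given by the three vertices
  have htop : affineSpan ℝ (Set.range ![A, B, C]) = ⊤ := by
    rw [hABC.affineSpan_eq_top_iff_card_eq_finrank_add_one]
    simp [finrank_euclideanSpace_fin]
  let bb : AffineBasis (Fin 3) ℝ Plane := ⟨![A, B, C], hABC, htop⟩
  set α : Plane →ᵃ[ℝ] ℝ := bb.coord 0 with hα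
  set β : Plane →ᵃ[ℝ] ℝ := bb.coord 1 with hβ
  set γ : Plane →ᵃ[ℝ] ℝ := bb.coord 2 with hγ
  have hαA : α A = 1 := by
    have h := bb.coord_apply (0:Fin 3) (0:Fin 3)
    rw [if_pos rfl] at h
    exact h
  have hβA : β A = 0 := by
    have h := bb.coord_apply (1:Fin 3) (0:Fin 3)
    rw [if_neg (by decide)] at h
    exact h
  have hγA : γ A = 0 := by
    have h := bb.coord_apply (2:Fin 3) (0:Fin 3)
    rw [if_neg (by decide)] at h
    exact h
  have hαB : α B = 0 := by
    have h := bb.coord_apply (0:Fin 3) (1:Fin 3)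
    rw [if_neg (by decide)] at h
    exact h
  have hβB : β B = 1 := by
    have h := bb.coord_apply (1:Fin 3) (1:Fin 3)
    rw [if_pos rfl] at h
    exact h
  have hγB : γ B = 0 := by
    have h := bb.coord_apply (2:Fin 3) (1:Fin 3)
    rw [if_neg (by decide)] at h
    exact h
  have hαC : α C = 0 := by
    have h := bb.coord_apply (0:Fin 3) (2:Fin 3)
    rw [if_neg (by decide)] at h
    exact h
  have hβC : β C = 0 := by
    have h := bb.coord_apply (1:Fin 3) (2:Fin 3)
    rw [if_neg (by decide)] at h
    exact h
  have hγC : γ C = 1 := by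
    have h := bb.coord_apply (2:Fin 3) (2:Fin 3)
    rw [if_pos rfl] at h
    exact h
  have hsum3 : ∀ x : Plane, α x + β x + γ x = 1 := fun x => by
    have h := bb.sum_coord_apply_eq_one x
    rwa [Fin.sum_univ_three] at h
  have hrec : ∀ x : Plane, x = α x • A + β x • B + γ x • C := fun x => by
    have h := bb.linear_combination_coord_eq_self x
    rw [Fin.sum_univ_three] at h
    exact h.symm
  -- the incenter's barycentric coordinates
  have hIdef : I = (a / (a + b + c)) • A + (b / (a + b + c)) • B + (c / (a + b + c)) • C := by
    rw [hI]
    unfold triIncenter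
    rfl
  have hw1 : ∑ i, (![a / (a + b + c), b / (a + b + c), c / (a + b + c)] : Fin 3 → ℝ) i = 1 := by
    rw [Fin.sum_univ_three]
    simp only [Matrix.cons_val_zero, Matrix.cons_val_one, Matrix.head_cons, Matrix.cons_val_two,
      Matrix.tail_cons]
    field_simp
  have hIcomb : I = Finset.univ.affineCombination ℝ (⇑bb)
      ![a / (a + b + c), b / (a + b + c), c / (a + b + c)] := by
    rw [Finset.univ.affineCombination_eq_linear_combination _ _ hw1, Fin.sum_univ_three]
    rw [hIdef]
    rfl
  have hαI : α I = a / (a + b + c) := by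
    rw [hIcomb]
    exact bb.coord_apply_combination_of_mem (Finset.mem_univ 0) hw1
  have hβI : β I = b / (a + b + c) := by
    rw [hIcomb]
    exact bb.coord_apply_combination_of_mem (Finset.mem_univ 1) hw1
  have hγI : γ I = c / (a + b + c) := by
    rw [hIcomb]
    exact bb.coord_apply_combination_of_mem (Finset.mem_univ 2) hw1
  -- permuted reconstruction and sums
  have hrec2 : ∀ x : Plane, x = β x • B + γ x • C + α x • A := fun x => by
    conv_lhs => rw [hrec x]
    module
  have hrec3 : ∀ x : Plane, x = γ x • C + α x • A + β x • B := fun x => by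
    conv_lhs => rw [hrec x]
    module
  have hsum32 : ∀ x : Plane, β x + γ x + α x = 1 := fun x => by linarith [hsum3 x]
  have hsum33 : ∀ x : Plane, γ x + α x + β x = 1 := fun x => by linarith [hsum3 x]
  -- characterizations of the three subtriangles
  have hchar₁ : convexHull ℝ ({A, I, B} : Set Plane) =
      {x | 0 ≤ γ x ∧ 0 ≤ c * α x - a * γ x ∧ 0 ≤ c * β x - b * γ x} :=
    aux_hull_char A B C I α β γ a b c ha0 hb0 hc0 hαA hβA hγA hαB hβB hγB
      hαI hβI hγI hrec hsum3
  have hchar₂ : convexHull ℝ ({B, I, C} : Set Plane) =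
      {x | 0 ≤ α x ∧ 0 ≤ a * β x - b * α x ∧ 0 ≤ a * γ x - c * α x} :=
    aux_hull_char B C A I β γ α b c a hb0 hc0 ha0 hβB hγB hαB hβC hγC hαC
      (by rw [hβI]; ring_nf) (by rw [hγI]; ring_nf) (by rw [hαI]; ring_nf) hrec2 hsum32
  have hchar₃ : convexHull ℝ ({C, I, A} : Set Plane) =
      {x | 0 ≤ β x ∧ 0 ≤ b * γ x - c * β x ∧ 0 ≤ b * α x - a * β x} :=
    aux_hull_char C A B I γ α β c a b hc0 ha0 hb0 hγC hαC hβC hγA hαA hβA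
      (by rw [hγI]; ring_nf) (by rw [hαI]; ring_nf) (by rw [hβI]; ring_nf) hrec3 hsum33
  -- the six affine functionals used for the interior arguments
  have happ : ∀ (u v : ℝ) (φ ψ : Plane →ᵃ[ℝ] ℝ) (x : Plane),
      (u • φ - v • ψ) x = u * φ x - v * ψ x := fun u v φ ψ x => by
    simp [AffineMap.coe_sub, AffineMap.coe_smul, Pi.sub_apply, Pi.smul_apply, smul_eq_mul]
  refine ⟨?_, ?_, ?_, ?_, ?_, ?_, ?_⟩
  · -- interior T₁ ∩ interior T₂ = ∅
    rw [Set.eq_empty_iff_forall_notMem]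
    rintro x ⟨hx1, hx2⟩
    have p1 : 0 < (c • α - a • γ) x := by
      refine aux_interior_pos _ (p := A) (q := I) ?_ ?_ hx1
      · rw [happ, happ, hαA, hγA, hαI, hγI]
        have : c * (a / (a + b + c)) - a * (c / (a + b + c)) = 0 := by field_simp; ring
        rw [this]
        simpa using hc0.ne'
      · intro y hy
        rw [hT₁, hchar₁] at hy
        rw [happ]
        exact hy.2.1
    have p2 : 0 < (a • γ - c • α) x := by
      refine aux_interior_pos _ (p := C) (q := I) ?_ ?_ hx2
      · rw [happ, happ, hγC, hαC, hγI, hαI]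
        have : a * (c / (a + b + c)) - c * (a / (a + b + c)) = 0 := by field_simp; ring
        rw [this]
        simpa using ha0.ne'
      · intro y hy
        rw [hT₂, hchar₂] at hy
        rw [happ]
        exact hy.2.2
    rw [happ] at p1 p2
    linarith
  · -- interior T₂ ∩ interior T₃ = ∅
    rw [Set.eq_empty_iff_forall_notMem]
    rintro x ⟨hx2, hx3⟩
    have p1 : 0 < (a • β - b • α) x := by
      refine aux_interior_pos _ (p := B) (q := I) ?_ ?_ hx2
      · rw [happ, happ, hβB, hαB, hβI, hαI]
        have : a * (b / (a + b + c)) - b * (a / (a + b + c)) = 0 := by field_simp; ring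
        rw [this]
        simpa using ha0.ne'
      · intro y hy
        rw [hT₂, hchar₂] at hy
        rw [happ]
        exact hy.2.1
    have p2 : 0 < (b • α - a • β) x := by
      refine aux_interior_pos _ (p := A) (q := I) ?_ ?_ hx3
      · rw [happ, happ, hαA, hβA, hαI, hβI]
        have : b * (a / (a + b + c)) - a * (b / (a + b + c)) = 0 := by field_simp; ring
        rw [this]
        simpa using hb0.ne'
      · intro y hy
        rw [hT₃, hchar₃] at hy
        rw [happ]
        exact hy.2.2
    rw [happ] at p1 p2
    linarith
  · -- interior T₃ ∩ interior T₁ = ∅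
    rw [Set.eq_empty_iff_forall_notMem]
    rintro x ⟨hx3, hx1⟩
    have p1 : 0 < (b • γ - c • β) x := by
      refine aux_interior_pos _ (p := C) (q := I) ?_ ?_ hx3
      · rw [happ, happ, hγC, hβC, hγI, hβI]
        have : b * (c / (a + b + c)) - c * (b / (a + b + c)) = 0 := by field_simp; ring
        rw [this]
        simpa using hb0.ne'
      · intro y hy
        rw [hT₃, hchar₃] at hy
        rw [happ]
        exact hy.2.1
    have p2 : 0 < (c • β - b • γ) x := by
      refine aux_interior_pos _ (p := B) (q := I) ?_ ?_ hx1
      · rw [happ, happ, hβB, hγB, hβI, hγI]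
        have : c * (b / (a + b + c)) - b * (c / (a + b + c)) = 0 := by field_simp; ring
        rw [this]
        simpa using hc0.ne'
      · intro y hy
        rw [hT₁, hchar₁] at hy
        rw [happ]
        exact hy.2.2
    rw [happ] at p1 p2
    linarith
  · -- the union
    have hIT : I ∈ convexHull ℝ ({A, B, C} : Set Plane) := by
      rw [hIdef]
      exact aux_combo_mem (by positivity) (by positivity) (by positivity) (by field_simp)
    have hTsub : ∀ x ∈ T, 0 ≤ α x ∧ 0 ≤ β x ∧ 0 ≤ γ x := by
      have : T ⊆ (α ⁻¹' Set.Ici (0:ℝ)) ∩ (β ⁻¹' Set.Ici (0:ℝ)) ∩ (γ ⁻¹' Set.Ici (0:ℝ)) := by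
        rw [hT]
        apply convexHull_min
        · refine Set.insert_subset ?_ (Set.insert_subset ?_ (Set.singleton_subset_iff.2 ?_)) <;>
            refine ⟨⟨?_, ?_⟩, ?_⟩ <;>
            simp only [Set.mem_preimage, Set.mem_Ici, hαA, hβA, hγA, hαB, hβB, hγB,
              hαC, hβC, hγC] <;> norm_num
        · exact (((convex_Ici _).affine_preimage _).inter
            ((convex_Ici _).affine_preimage _)).inter ((convex_Ici _).affine_preimage _)
      intro x hx
      obtain ⟨⟨h1, h2⟩, h3⟩ := this hx
      exact ⟨h1, h2, h3⟩
    have hAT : A ∈ convexHull ℝ ({A, B, C} : Set Plane) :=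
      subset_convexHull ℝ _ (by simp)
    have hBT : B ∈ convexHull ℝ ({A, B, C} : Set Plane) :=
      subset_convexHull ℝ _ (by simp)
    have hCT : C ∈ convexHull ℝ ({A, B, C} : Set Plane) :=
      subset_convexHull ℝ _ (by simp)
    apply Set.Subset.antisymm
    · apply Set.union_subset
      apply Set.union_subset
      · rw [hT₁, hT]
        exact convexHull_min
          (Set.insert_subset hAT (Set.insert_subset hIT (Set.singleton_subset_iff.2 hBT)))
          (convex_convexHull ℝ _)
      · rw [hT₂, hT]
        exact convexHull_min
          (Set.insert_subset hBT (Set.insert_subset hIT (Set.singleton_subset_iff.2 hCT)))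
          (convex_convexHull ℝ _)
      · rw [hT₃, hT]
        exact convexHull_min
          (Set.insert_subset hCT (Set.insert_subset hIT (Set.singleton_subset_iff.2 hAT)))
          (convex_convexHull ℝ _)
    · intro x hx
      obtain ⟨h1, h2, h3⟩ := hTsub x hx
      have key := aux_key (P := a * β x - b * α x) (Q := b * γ x - c * β x)
        (R := c * α x - a * γ x) ha0 hb0 hc0 (by ring)
      rcases key with hk | hk | hk
      · exact Or.inl (Or.inl (by
          rw [hT₁, hchar₁]
          exact ⟨h3, hk.1, by linarith [hk.2]⟩))
      · exact Or.inl (Or.inr (by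
          rw [hT₂, hchar₂]
          exact ⟨h1, hk.1, by linarith [hk.2]⟩))
      · exact Or.inr (by
          rw [hT₃, hchar₃]
          exact ⟨h2, hk.1, by linarith [hk.2]⟩)
  · -- ∠ A I B
    have h := aux_inner_incenter hadef hbdef hcdef ha0 hb0 hc0 tri1 tri2 hIdef
    exact aux_angle_obtuse h
  · -- ∠ B I C
    have hIdef2 : I = (b / (b + c + a)) • B + (c / (b + c + a)) • C +
        (a / (b + c + a)) • A := by
      rw [hIdef]
      match_scalars <;> ring
    have h := aux_inner_incenter hbdef hcdef hadef hb0 hc0 ha0 (by linarith) (by linarith)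
      hIdef2
    exact aux_angle_obtuse h
  · -- ∠ C I A
    have hIdef3 : I = (c / (c + a + b)) • C + (a / (c + a + b)) • A +
        (b / (c + a + b)) • B := by
      rw [hIdef]
      match_scalars <;> ring
    have h := aux_inner_incenter hcdef hadef hbdef hc0 ha0 hb0 (by linarith) (by linarith)
      hIdef3
    exact aux_angle_obtuse h
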